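/- For λ > λ_s, the function f_λ has a strict local minimum at q_u(λ) and a strict local maximum at q_s(λ), where q_u and q_s are the two zeros of h(q) = λ²k q^{k-1} - λ²k q^k - q in (0,1) with q_u < q_s, and f_λ is strictly monotone on each of the intervals (0,q_u), (q_u,q_s), (q_s,1). -/

import Mathlib

set_option maxHeartbeats 1000000

theorem stmt_5 (k : ℕ) (hk : 3 ≤ k) (lam : ℝ)
    (hlam : Real.sqrt (((k : ℝ) - 1) ^ (k - 1) / ((k : ℝ) * ((k : ℝ) - 2) ^ (k - 2))) < lam)
    (f h : ℝ → ℝ)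
    (hf : f = fun t : ℝ => lam ^ 2 * t ^ k + Real.log (1 - t) + t)
    (hh : h = fun q : ℝ => lam ^ 2 * k * q ^ (k - 1) - lam ^ 2 * k * q ^ k - q) :
    ∃ qu qs : ℝ, qu ∈ Set.Ioo (0 : ℝ) 1 ∧ qs ∈ Set.Ioo (0 : ℝ) 1 ∧ qu < qs ∧
      h qu = 0 ∧ h qs = 0 ∧
      (∃ ε > (0 : ℝ), ∀ t : ℝ, |t - qu| < ε → t ≠ qu → f qu < f t) ∧
      (∃ ε > (0 : ℝ), ∀ t : ℝ, |t - qs| < ε → t ≠ qs → f t < f qs) ∧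
      StrictAntiOn f (Set.Ioo 0 qu) ∧
      StrictMonoOn f (Set.Ioo qu qs) ∧
      StrictAntiOn f (Set.Ioo qs 1) := by
  subst hf hh
  have hk3 : (3:ℝ) ≤ (k:ℝ) := by exact_mod_cast hk
  have hkpos : (0:ℝ) < k := by linarith
  have ha : (0:ℝ) < (k:ℝ) - 1 := by linarith
  have hb : (0:ℝ) < (k:ℝ) - 2 := by linarith
  have hApos : (0:ℝ) < ((k:ℝ)-1)^(k-1) := pow_pos ha _
  have hBpos : (0:ℝ) < (k:ℝ) * ((k:ℝ)-2)^(k-2) := mul_pos hkpos (pow_pos hb _)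
  have hlam0 : 0 < lam := lt_of_le_of_lt (Real.sqrt_nonneg _) hlam
  have hlamsq : ((k:ℝ)-1)^(k-1) / ((k:ℝ)*((k:ℝ)-2)^(k-2)) < lam^2 := by
    have h1 := Real.sq_sqrt (le_of_lt (div_pos hApos hBpos))
    nlinarith [Real.sqrt_nonneg (((k:ℝ)-1)^(k-1)/((k:ℝ)*((k:ℝ)-2)^(k-2)))]
  have hkey : ((k:ℝ)-1)^(k-1) < lam^2 * ((k:ℝ)*((k:ℝ)-2)^(k-2)) := by
    rw [div_lt_iff₀ hBpos] at hlamsq; linarith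
  set c := lam^2 * (k:ℝ) with hc
  have hcpos : 0 < c := mul_pos (pow_pos hlam0 2) hkpos
  set g : ℝ → ℝ := fun q => c * q^(k-2) - c * q^(k-1) - 1 with hgdef
  have hcast1 : ((k-1:ℕ):ℝ) = (k:ℝ) - 1 := by
    rw [Nat.cast_sub (by omega)]; norm_num
  have hcast2 : ((k-2:ℕ):ℝ) = (k:ℝ) - 2 := by
    rw [Nat.cast_sub (by omega)]; norm_num
  set qstar : ℝ := ((k:ℝ)-2)/((k:ℝ)-1) with hqs_def
  have hqstar0 : 0 < qstar := div_pos hb ha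
  have hqstar1 : qstar < 1 := by rw [div_lt_one ha]; linarith
  have hgderiv : ∀ q : ℝ, HasDerivAt g
      (c * ((k-2:ℕ) * q^(k-2-1)) - c * ((k-1:ℕ) * q^(k-1-1))) q := fun q =>
    (((hasDerivAt_pow (k-2) q).const_mul c).sub ((hasDerivAt_pow (k-1) q).const_mul c)).sub_const 1
  have hgcont : Continuous g := by
    apply Continuous.sub; apply Continuous.sub
    · exact continuous_const.mul (continuous_pow _)
    · exact continuous_const.mul (continuous_pow _)
    · exact continuous_const
  have hgd_pos : ∀ q ∈ Set.Ioo (0:ℝ) qstar,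
      0 < c * ((k-2:ℕ) * q^(k-2-1)) - c * ((k-1:ℕ) * q^(k-1-1)) := by
    intro q hq
    have hq0 : 0 < q := hq.1
    have e1 : k-2-1 = k-3 := by omega
    have e2 : k-1-1 = k-2 := by omega
    rw [e1, e2, hcast1, hcast2]
    have hq3 : 0 < q^(k-3) := pow_pos hq0 _
    have e3 : q^(k-2) = q^(k-3) * q := by rw [← pow_succ]; congr 1; omega
    rw [e3]
    have hlt : ((k:ℝ)-1) * q < (k:ℝ)-2 := by
      have h2 := hq.2
      rw [hqs_def, lt_div_iff₀ ha] at h2; linarith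
    have key : 0 < c * q^(k-3) * (((k:ℝ)-2) - ((k:ℝ)-1)*q) :=
      mul_pos (mul_pos hcpos hq3) (by linarith)
    nlinarith [key]
  have hgd_neg : ∀ q ∈ Set.Ioo qstar (1:ℝ),
      c * ((k-2:ℕ) * q^(k-2-1)) - c * ((k-1:ℕ) * q^(k-1-1)) < 0 := by
    intro q hq
    have hq0 : 0 < q := lt_trans hqstar0 hq.1
    have e1 : k-2-1 = k-3 := by omega
    have e2 : k-1-1 = k-2 := by omega
    rw [e1, e2, hcast1, hcast2]
    have hq3 : 0 < q^(k-3) := pow_pos hq0 _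
    have e3 : q^(k-2) = q^(k-3) * q := by rw [← pow_succ]; congr 1; omega
    rw [e3]
    have hlt : (k:ℝ)-2 < ((k:ℝ)-1) * q := by
      have h2 := hq.1
      rw [hqs_def, div_lt_iff₀ ha] at h2; linarith
    have key : 0 < c * q^(k-3) * (((k:ℝ)-1)*q - ((k:ℝ)-2)) :=
      mul_pos (mul_pos hcpos hq3) (by linarith)
    nlinarith [key]
  have hgmono : StrictMonoOn g (Set.Icc 0 qstar) := by
    apply strictMonoOn_of_deriv_pos (convex_Icc _ _) hgcont.continuousOn
    intro x hx
    rw [interior_Icc] at hx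
    rw [(hgderiv x).deriv]
    exact hgd_pos x hx
  have hganti : StrictAntiOn g (Set.Icc qstar 1) := by
    apply strictAntiOn_of_deriv_neg (convex_Icc _ _) hgcont.continuousOn
    intro x hx
    rw [interior_Icc] at hx
    rw [(hgderiv x).deriv]
    exact hgd_neg x hx
  have hg0 : g 0 = -1 := by
    simp [hgdef, zero_pow (by omega : k-2 ≠ 0), zero_pow (by omega : k-1 ≠ 0)]
  have hg1 : g 1 = -1 := by simp [hgdef]
  have hgqstar : 0 < g qstar := by
    have e2 : qstar^(k-1) = qstar^(k-2) * qstar := by rw [← pow_succ]; congr 1; omega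
    have e : qstar ^ (k-2) = ((k:ℝ)-2)^(k-2) / ((k:ℝ)-1)^(k-2) := div_pow _ _ _
    have epow : ((k:ℝ)-1)^(k-2) * ((k:ℝ)-1) = ((k:ℝ)-1)^(k-1) := by
      rw [← pow_succ]; congr 1; omega
    have h1mq : 1 - qstar = 1/((k:ℝ)-1) := by
      rw [hqs_def]; field_simp; ring_nf
    have key : (1:ℝ) < c * qstar^(k-2) * (1 - qstar) := by
      rw [h1mq, e]
      have h2 : c * (((k:ℝ)-2)^(k-2)/((k:ℝ)-1)^(k-2)) * (1/((k:ℝ)-1))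
          = c * ((k:ℝ)-2)^(k-2) / ((k:ℝ)-1)^(k-1) := by
        rw [← epow]; field_simp
      rw [h2, lt_div_iff₀ hApos, one_mul]
      calc ((k:ℝ)-1)^(k-1) < lam^2 * ((k:ℝ) * ((k:ℝ)-2)^(k-2)) := hkey
        _ = c * ((k:ℝ)-2)^(k-2) := by rw [hc]; ring
    show 0 < c * qstar^(k-2) - c * qstar^(k-1) - 1
    rw [e2]; linarith [key]
  -- existence of the two zeros
  obtain ⟨qu, hquI, hgqu⟩ : ∃ qu ∈ Set.Ioo (0:ℝ) qstar, g qu = 0 := by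
    have := intermediate_value_Ioo (le_of_lt hqstar0) hgcont.continuousOn
      (a := (0:ℝ)) (b := qstar)
    have h0 : (0:ℝ) ∈ Set.Ioo (g 0) (g qstar) := by rw [hg0]; exact ⟨by norm_num, hgqstar⟩
    obtain ⟨x, hx, hgx⟩ := this h0
    exact ⟨x, hx, hgx⟩
  obtain ⟨qs, hqsI, hgqs⟩ : ∃ qs ∈ Set.Ioo qstar (1:ℝ), g qs = 0 := by
    have := intermediate_value_Ioo' (le_of_lt hqstar1) hgcont.continuousOn
      (a := qstar) (b := (1:ℝ))
    have h0 : (0:ℝ) ∈ Set.Ioo (g 1) (g qstar) := by rw [hg1]; exact ⟨by norm_num, hgqstar⟩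
    obtain ⟨x, hx, hgx⟩ := this h0
    exact ⟨x, hx, hgx⟩
  have hqu0 : 0 < qu := hquI.1
  have hquq : qu < qstar := hquI.2
  have hqsq : qstar < qs := hqsI.1
  have hqs1 : qs < 1 := hqsI.2
  have hqus : qu < qs := lt_trans hquq hqsq
  -- sign of g
  have hgneg1 : ∀ t ∈ Set.Ioo (0:ℝ) qu, g t < 0 := by
    intro t ht
    have := hgmono ⟨le_of_lt ht.1, le_of_lt (lt_trans ht.2 hquq)⟩
      ⟨le_of_lt hqu0, le_of_lt hquq⟩ ht.2
    rw [hgqu] at this; exact this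
  have hgpos : ∀ t ∈ Set.Ioo qu qs, 0 < g t := by
    intro t ht
    rcases le_or_gt t qstar with hle | hlt
    · have := hgmono ⟨le_of_lt hqu0, le_of_lt hquq⟩
        ⟨le_of_lt (lt_trans hqu0 ht.1), hle⟩ ht.1
      rw [hgqu] at this; exact this
    · have := hganti ⟨le_of_lt hlt, le_of_lt (lt_trans ht.2 hqs1)⟩
        ⟨le_of_lt hqsq, le_of_lt hqs1⟩ ht.2
      rw [hgqs] at this; exact this
  have hgneg2 : ∀ t ∈ Set.Ioo qs (1:ℝ), g t < 0 := by
    intro t ht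
    have := hganti ⟨le_of_lt hqsq, le_of_lt hqs1⟩
      ⟨le_of_lt (lt_trans hqsq ht.1), le_of_lt ht.2⟩ ht.1
    rw [hgqs] at this; exact this
  -- h = t * g t
  have hhg : ∀ t : ℝ, lam^2 * (k:ℝ) * t^(k-1) - lam^2 * (k:ℝ) * t^k - t = t * g t := by
    intro t
    have e1 : t^(k-1) = t^(k-2) * t := by rw [← pow_succ]; congr 1; omega
    have e2 : t^k = t^(k-1) * t := by rw [← pow_succ]; congr 1; omega
    rw [hgdef]; simp only []
    rw [e2, e1, hc]; ring
  -- derivative of f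
  have hfderiv : ∀ t : ℝ, t < 1 →
      HasDerivAt (fun t : ℝ => lam ^ 2 * t ^ k + Real.log (1 - t) + t)
        (t * g t / (1 - t)) t := by
    intro t ht
    have h1t : (1:ℝ) - t ≠ 0 := by intro hz; linarith [(sub_eq_zero.mp hz)]
    have d1 : HasDerivAt (fun t:ℝ => lam^2 * t^k) (lam^2 * ((k:ℕ) * t^(k-1))) t :=
      (hasDerivAt_pow k t).const_mul _
    have du : HasDerivAt (fun t:ℝ => 1 - t) (-1) t := (hasDerivAt_id t).const_sub 1
    have d2 : HasDerivAt (fun t:ℝ => Real.log (1-t)) ((1-t)⁻¹ * (-1)) t :=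
      (Real.hasDerivAt_log h1t).comp t du
    have d3 := (d1.add d2).add (hasDerivAt_id t)
    have d4 : HasDerivAt (fun t : ℝ => lam ^ 2 * t ^ k + Real.log (1 - t) + t) _ t := d3
    convert d4 using 1
    rw [← hhg]
    rw [div_eq_iff h1t]
    have e2 : t^k = t^(k-1) * t := by rw [← pow_succ]; congr 1; omega
    rw [e2]
    field_simp
    ring
  have hfcont : ContinuousOn (fun t : ℝ => lam ^ 2 * t ^ k + Real.log (1 - t) + t)
      (Set.Iio (1:ℝ)) := by
    apply ContinuousOn.add
    apply ContinuousOn.add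
    · exact (continuous_const.mul (continuous_pow k)).continuousOn
    · apply ContinuousOn.log
      · exact (continuous_const.sub continuous_id).continuousOn
      · intro t ht
        simp only [Set.mem_Iio] at ht
        intro hz; rw [sub_eq_zero] at hz; linarith
    · exact continuous_id.continuousOn
  set F : ℝ → ℝ := fun t : ℝ => lam ^ 2 * t ^ k + Real.log (1 - t) + t with hF
  -- monotonicity pieces
  have hanti1 : StrictAntiOn F (Set.Icc 0 qu) := by
    apply strictAntiOn_of_deriv_neg (convex_Icc _ _)
      (hfcont.mono (by intro x hx; exact lt_of_le_of_lt hx.2 (lt_trans hquq hqstar1)))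
    intro x hx
    rw [interior_Icc] at hx
    rw [(hfderiv x (lt_trans hx.2 (lt_trans hquq hqstar1))).deriv]
    apply div_neg_of_neg_of_pos
    · exact mul_neg_of_pos_of_neg hx.1 (hgneg1 x hx)
    · have : x < 1 := lt_trans hx.2 (lt_trans hquq hqstar1); linarith
  have hmono2 : StrictMonoOn F (Set.Icc qu qs) := by
    apply strictMonoOn_of_deriv_pos (convex_Icc _ _)
      (hfcont.mono (by intro x hx; exact lt_of_le_of_lt hx.2 hqs1))
    intro x hx
    rw [interior_Icc] at hx
    rw [(hfderiv x (lt_trans hx.2 hqs1)).deriv]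
    apply div_pos
    · exact mul_pos (lt_trans hqu0 hx.1) (hgpos x hx)
    · have : x < 1 := lt_trans hx.2 hqs1; linarith
  set m : ℝ := (qs + 1)/2 with hm
  have hqsm : qs < m := by rw [hm]; linarith
  have hm1 : m < 1 := by rw [hm]; linarith
  have hanti3 : StrictAntiOn F (Set.Icc qs m) := by
    apply strictAntiOn_of_deriv_neg (convex_Icc _ _)
      (hfcont.mono (by intro x hx; exact lt_of_le_of_lt hx.2 hm1))
    intro x hx
    rw [interior_Icc] at hx
    rw [(hfderiv x (lt_trans hx.2 hm1)).deriv]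
    apply div_neg_of_neg_of_pos
    · exact mul_neg_of_pos_of_neg (lt_trans hqu0 (lt_trans hqus hx.1))
        (hgneg2 x ⟨hx.1, lt_trans hx.2 hm1⟩)
    · have : x < 1 := lt_trans hx.2 hm1; linarith
  have hanti3' : StrictAntiOn F (Set.Ioo qs 1) := by
    apply strictAntiOn_of_deriv_neg (convex_Ioo _ _)
      (hfcont.mono (by intro x hx; exact hx.2))
    intro x hx
    rw [interior_Ioo] at hx
    rw [(hfderiv x hx.2).deriv]
    apply div_neg_of_neg_of_pos
    · exact mul_neg_of_pos_of_neg (lt_trans hqu0 (lt_trans hqus hx.1)) (hgneg2 x hx)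
    · linarith [hx.2]
  refine ⟨qu, qs, ⟨hqu0, lt_trans hquq hqstar1⟩, ⟨lt_trans hqu0 hqus, hqs1⟩, hqus, ?_, ?_, ?_, ?_, ?_, ?_, ?_⟩
  · show lam^2 * (k:ℝ) * qu^(k-1) - lam^2 * (k:ℝ) * qu^k - qu = 0
    rw [hhg qu, hgqu, mul_zero]
  · show lam^2 * (k:ℝ) * qs^(k-1) - lam^2 * (k:ℝ) * qs^k - qs = 0
    rw [hhg qs, hgqs, mul_zero]
  · refine ⟨min qu (qs - qu), lt_min hqu0 (by linarith), ?_⟩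
    intro t hdist hne
    rcases lt_or_gt_of_ne hne with hlt | hgt
    · have h1 : qu - t < min qu (qs - qu) := by
        rw [abs_sub_lt_iff] at hdist; exact hdist.2
      have ht0 : 0 < t := by
        have := min_le_left qu (qs - qu); linarith
      exact hanti1 ⟨le_of_lt ht0, le_of_lt hlt⟩ ⟨le_of_lt hqu0, le_refl qu⟩ hlt
    · have h1 : t - qu < min qu (qs - qu) := by
        rw [abs_sub_lt_iff] at hdist; exact hdist.1
      have hts : t < qs := by
        have := min_le_right qu (qs - qu); linarith
      exact hmono2 ⟨le_refl qu, le_of_lt hqus⟩ ⟨le_of_lt hgt, le_of_lt hts⟩ hgt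
  · refine ⟨min (qs - qu) (m - qs), lt_min (by linarith) (by linarith), ?_⟩
    intro t hdist hne
    rcases lt_or_gt_of_ne hne with hlt | hgt
    · have h1 : qs - t < min (qs - qu) (m - qs) := by
        rw [abs_sub_lt_iff] at hdist; exact hdist.2
      have htu : qu < t := by
        have := min_le_left (qs - qu) (m - qs); linarith
      exact hmono2 ⟨le_of_lt htu, le_of_lt hlt⟩ ⟨le_of_lt hqus, le_refl qs⟩ hlt
    · have h1 : t - qs < min (qs - qu) (m - qs) := by
        rw [abs_sub_lt_iff] at hdist; exact hdist.1
      have htm : t < m := by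
        have := min_le_right (qs - qu) (m - qs); linarith
      exact hanti3 ⟨le_refl qs, le_of_lt hqsm⟩ ⟨le_of_lt hgt, le_of_lt htm⟩ hgt
  · exact hanti1.mono Set.Ioo_subset_Icc_self
  · exact hmono2.mono Set.Ioo_subset_Icc_self
  · exact hanti3'
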